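/- Let D be an abelian monoidal category with right exact tensor product in both variables, A an algebra object, M a right A-module object, and I, J ideals of A. Then (MI)J = M(IJ) as subobjects of M. -/

import Mathlib

open CategoryTheory MonoidalCategory CategoryTheory.Limits

section

variable {C : Type*} [Category C] [MonoidalCategory C] [Abelian C]

/-- A subobject `X ↪ A` of an algebra object `A` is a (two-sided) ideal if left and
right multiplication by `A` factor through it. -/
def IsIdealSub (A : Mon C) (X : Subobject A.X) : Prop :=
  (∃ l : A.X ⊗ (X : C) ⟶ (X : C), l ≫ X.arrow = (𝟙 A.X ⊗ₘ X.arrow) ≫ A.mon.mul) ∧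
  (∃ r : (X : C) ⊗ A.X ⟶ (X : C), r ≫ X.arrow = (X.arrow ⊗ₘ 𝟙 A.X) ≫ A.mon.mul)

end

/-- Precomposing with an epimorphism does not change the image subobject. -/
lemma mk_image_epi_comp {C : Type*} [Category C] [Abelian C] {X' X Y : C}
    (h : X' ⟶ X) (f : X ⟶ Y) [Epi h] :
    Subobject.mk (image.ι (h ≫ f)) = Subobject.mk (image.ι f) := by
  have : StrongEpi (h ≫ factorThruImage f) := strongEpi_of_epi _
  have comm : (h ≫ factorThruImage f) ≫ image.ι f = h ≫ f := by
    rw [Category.assoc, image.fac]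
  exact Subobject.mk_eq_mk_of_comm _ _
    (image.isoStrongEpiMono (h ≫ factorThruImage f) (image.ι f) comm).symm
    (image.isoStrongEpiMono_inv_comp_mono _ _ comm)

set_option maxHeartbeats 1000000 in
/-- Let `D` be an abelian monoidal category with right exact
tensor product in both variables, `A` an algebra object, `(M, act)` a right
`A`-module object, and `I, J` ideals of `A`.  Then `(MI)J = M(IJ)` as subobjects
of `M`, where `MI` is the image of `M ⊗ I ⟶ M ⊗ A ⟶ M` and `IJ` is the image of
`I ⊗ J ⟶ A ⊗ A ⟶ A`. -/
theorem stmt12 {D : Type*} [Category D] [MonoidalCategory D] [Abelian D]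
    (hre : ∀ Z : D, Nonempty (PreservesFiniteColimits (tensorLeft Z)) ∧
      Nonempty (PreservesFiniteColimits (tensorRight Z)))
    (A : Mon D) (M : D) (act : M ⊗ A.X ⟶ M)
    (hunit : (𝟙 M ⊗ₘ A.mon.one) ≫ act = (ρ_ M).hom)
    (hassoc : (𝟙 M ⊗ₘ A.mon.mul) ≫ act = (α_ M A.X A.X).inv ≫ (act ⊗ₘ 𝟙 A.X) ≫ act)
    (I J : Subobject A.X) (hI : IsIdealSub A I) (hJ : IsIdealSub A J) :
    Subobject.mk (image.ι ((image.ι ((𝟙 M ⊗ₘ I.arrow) ≫ act) ⊗ₘ J.arrow) ≫ act)) =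
      Subobject.mk (image.ι ((𝟙 M ⊗ₘ image.ι ((I.arrow ⊗ₘ J.arrow) ≫ A.mon.mul)) ≫ act)) := by
  haveI : PreservesFiniteColimits (tensorLeft M) := (hre M).1.some
  haveI : PreservesFiniteColimits (tensorRight (J : D)) := (hre (J : D)).2.some
  set f : M ⊗ (I : D) ⟶ M := (𝟙 M ⊗ₘ I.arrow) ≫ act with hf
  set g : (I : D) ⊗ (J : D) ⟶ A.X := (I.arrow ⊗ₘ J.arrow) ≫ A.mon.mul with hg
  set p : image f ⊗ (J : D) ⟶ M := (image.ι f ⊗ₘ J.arrow) ≫ act with hp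
  set q : M ⊗ image g ⟶ M := (𝟙 M ⊗ₘ image.ι g) ≫ act with hq
  have he1 : Epi (factorThruImage f ⊗ₘ 𝟙 (J : D)) := by
    have : Epi ((tensorRight (J : D)).map (factorThruImage f)) :=
      (tensorRight (J : D)).map_epi _
    simpa [tensorRight] using this
  have he2 : Epi (𝟙 M ⊗ₘ factorThruImage g) := by
    have : Epi ((tensorLeft M).map (factorThruImage g)) :=
      (tensorLeft M).map_epi _
    simpa [tensorLeft] using this
  have key : (factorThruImage f ⊗ₘ 𝟙 (J : D)) ≫ p =
      (α_ M (I : D) (J : D)).hom ≫ (𝟙 M ⊗ₘ factorThruImage g) ≫ q := by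
    have lhs1 : (factorThruImage f ⊗ₘ 𝟙 (J : D)) ≫ (image.ι f ⊗ₘ J.arrow)
        = f ⊗ₘ J.arrow := by
      rw [tensorHom_comp_tensorHom, image.fac, Category.id_comp]
    have rhs1 : (𝟙 M ⊗ₘ factorThruImage g) ≫ (𝟙 M ⊗ₘ image.ι g) = 𝟙 M ⊗ₘ g := by
      rw [tensorHom_comp_tensorHom, image.fac, Category.id_comp]
    have h1 : f ⊗ₘ J.arrow = ((𝟙 M ⊗ₘ I.arrow) ⊗ₘ J.arrow) ≫ (act ⊗ₘ 𝟙 A.X) := by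
      rw [tensorHom_comp_tensorHom, Category.comp_id, hf]
    have h2 : (act ⊗ₘ 𝟙 A.X) ≫ act = (α_ M A.X A.X).hom ≫ (𝟙 M ⊗ₘ A.mon.mul) ≫ act := by
      rw [hassoc, Iso.hom_inv_id_assoc]
    have h3 : ((𝟙 M ⊗ₘ I.arrow) ⊗ₘ J.arrow) ≫ (α_ M A.X A.X).hom
        = (α_ M (I : D) (J : D)).hom ≫ (𝟙 M ⊗ₘ (I.arrow ⊗ₘ J.arrow)) :=
      associator_naturality _ _ _
    have h4 : (𝟙 M ⊗ₘ (I.arrow ⊗ₘ J.arrow)) ≫ (𝟙 M ⊗ₘ A.mon.mul) = 𝟙 M ⊗ₘ g := by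
      rw [tensorHom_comp_tensorHom, Category.id_comp, hg]
    calc (factorThruImage f ⊗ₘ 𝟙 (J : D)) ≫ p
        = ((factorThruImage f ⊗ₘ 𝟙 (J : D)) ≫ (image.ι f ⊗ₘ J.arrow)) ≫ act := by
          rw [hp, Category.assoc]
      _ = (((𝟙 M ⊗ₘ I.arrow) ⊗ₘ J.arrow) ≫ (act ⊗ₘ 𝟙 A.X)) ≫ act := by rw [lhs1, h1]
      _ = ((𝟙 M ⊗ₘ I.arrow) ⊗ₘ J.arrow) ≫ (α_ M A.X A.X).hom ≫ (𝟙 M ⊗ₘ A.mon.mul) ≫ act := by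
          rw [Category.assoc, h2]
      _ = (α_ M (I : D) (J : D)).hom ≫ (𝟙 M ⊗ₘ (I.arrow ⊗ₘ J.arrow)) ≫ (𝟙 M ⊗ₘ A.mon.mul) ≫ act := by
          rw [← Category.assoc, h3, Category.assoc]
      _ = (α_ M (I : D) (J : D)).hom ≫ (𝟙 M ⊗ₘ g) ≫ act := by
          rw [← Category.assoc (𝟙 M ⊗ₘ (I.arrow ⊗ₘ J.arrow)), h4]
      _ = (α_ M (I : D) (J : D)).hom ≫ (𝟙 M ⊗ₘ factorThruImage g) ≫ q := by
          rw [hq, ← Category.assoc (𝟙 M ⊗ₘ factorThruImage g), rhs1]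
  calc Subobject.mk (image.ι p)
      = Subobject.mk (image.ι ((factorThruImage f ⊗ₘ 𝟙 (J : D)) ≫ p)) :=
        (mk_image_epi_comp _ _).symm
    _ = Subobject.mk (image.ι ((α_ M (I : D) (J : D)).hom ≫ (𝟙 M ⊗ₘ factorThruImage g) ≫ q)) := by
        rw [key]
    _ = Subobject.mk (image.ι ((𝟙 M ⊗ₘ factorThruImage g) ≫ q)) := mk_image_epi_comp _ _
    _ = Subobject.mk (image.ι q) := mk_image_epi_comp _ _
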